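/- Let A be an m×n strictly sign regular matrix with sign pattern ε = (ε_1, …, ε_{min{m,n}}) (all r×r minors have sign ε_r). Then S^+(Ax) ≤ S^-(x) for all nonzero x ∈ ℝ^n. -/

import Mathlib

open Matrix Filter

/-- Number of sign changes in a list of reals (consecutive pairs with negative product). -/
noncomputable def signChanges (l : List ℝ) : ℕ :=
  (l.zip l.tail).countP (fun p => decide (p.1 * p.2 < 0))

/-- `S^-(v)`: sign changes of the coordinates of `v` after discarding zero entries. -/
noncomputable def Sm {n : ℕ} (v : Fin n → ℝ) : ℕ :=
  signChanges ((List.ofFn v).filter (fun x => decide (x ≠ 0)))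

/-- `S^+(v)`: maximal number of sign changes over all ±1 completions of the zero
entries of `v`, with the convention `S^+(0) = n`. -/
noncomputable def Sp {n : ℕ} (v : Fin n → ℝ) : ℕ :=
  if v = 0 then n
  else Finset.univ.sup (fun σ : Fin n → Bool =>
    signChanges (List.ofFn (fun i => if v i = 0 then (if σ i then (1:ℝ) else -1) else v i)))

/-- First nonzero entry of a vector (`0` if the vector is zero). -/
noncomputable def firstNz {n : ℕ} (v : Fin n → ℝ) : ℝ :=
  ((List.ofFn v).filter (fun x => decide (x ≠ 0))).headI

/-- `A` is strictly sign regular with sign pattern `ε`: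
every `r × r` minor (`1 ≤ r ≤ min m n`) is nonzero with sign `ε r`. -/
def ssrPattern {m n : ℕ} (A : Matrix (Fin m) (Fin n) ℝ) (ε : ℕ → ℝ) : Prop :=
  ∀ r : ℕ, 1 ≤ r → r ≤ min m n → ∀ (f : Fin r → Fin m) (g : Fin r → Fin n),
    StrictMono f → StrictMono g → 0 < ε r * (A.submatrix f g).det

/-- `A` is sign regular with sign pattern `ε`:
every nonzero `r × r` minor (`1 ≤ r ≤ min m n`) has sign `ε r`. -/
def srPattern {m n : ℕ} (A : Matrix (Fin m) (Fin n) ℝ) (ε : ℕ → ℝ) : Prop :=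
  ∀ r : ℕ, 1 ≤ r → r ≤ min m n → ∀ (f : Fin r → Fin m) (g : Fin r → Fin n),
    StrictMono f → StrictMono g → 0 ≤ ε r * (A.submatrix f g).det

/-- The map `f` picks out consecutive indices. -/
def Contig {r m : ℕ} (f : Fin r → Fin m) : Prop :=
  ∃ a : ℕ, ∀ i : Fin r, (f i : ℕ) = a + (i : ℕ)

/-- recursive version of signChanges -/
noncomputable def sc : List ℝ → ℕ
  | [] => 0
  | [_] => 0
  | a :: b :: t => (if a * b < 0 then 1 else 0) + sc (b :: t)

@[simp] lemma sc_nil : sc [] = 0 := rfl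
@[simp] lemma sc_single (a : ℝ) : sc [a] = 0 := rfl
lemma sc_cons_cons (a b : ℝ) (t : List ℝ) :
    sc (a :: b :: t) = (if a * b < 0 then 1 else 0) + sc (b :: t) := rfl

lemma signChanges_eq_sc (l : List ℝ) : signChanges l = sc l := by
  induction l with
  | nil => rfl
  | cons a t ih =>
    cases t with
    | nil => rfl
    | cons b u =>
      simp only [signChanges, List.tail_cons, List.zip_cons_cons, List.countP_cons] at *
      rw [sc_cons_cons, ← ih]
      by_cases h : a * b < 0 <;> simp [h] <;> omega

lemma sc_le_sc_cons (a : ℝ) (l : List ℝ) : sc l ≤ sc (a :: l) := by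
  cases l with
  | nil => simp
  | cons b t => rw [sc_cons_cons]; omega

lemma sc_lt_length {l : List ℝ} (h : l ≠ []) : sc l < l.length := by
  induction l with
  | nil => simp at h
  | cons a t ih =>
    cases t with
    | nil => simp
    | cons b u =>
      rw [sc_cons_cons]
      have := ih (by simp)
      simp only [List.length_cons] at *
      split <;> omega

lemma sc_suffix_le {s l : List ℝ} (h : s <:+ l) : sc s ≤ sc l := by
  induction l with
  | nil => simp [List.suffix_nil.mp h]
  | cons a t ih =>
    rcases List.suffix_cons_iff.mp h with h' | h'
    · subst h'; exact le_rfl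
    · exact (ih h').trans (sc_le_sc_cons a t)

/-- last element with default 0 -/
noncomputable def lst (L : List ℝ) : ℝ := L.getLastD 0

@[simp] lemma lst_cons_cons (a b : ℝ) (u : List ℝ) : lst (a :: b :: u) = lst (b :: u) := by
  simp [lst, List.getLastD_cons]

/-- sign alternation: head of a nonempty suffix S of a nowhere-zero list L has sign
  (sign of last of L) * (-1)^(sc S). -/
lemma sc_sign : ∀ {L S : List ℝ}, (∀ a ∈ L, a ≠ 0) → S <:+ L → S ≠ [] →
    0 < lst L * S.headI * (-1 : ℝ) ^ (sc S) := by
  intro L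
  induction L with
  | nil => intro S _ hS hne; simp [List.suffix_nil.mp hS] at hne
  | cons a M ih =>
    intro S hnz hS hne
    rcases List.suffix_cons_iff.mp hS with h' | h'
    · subst h'
      cases M with
      | nil =>
        have ha : a ≠ 0 := hnz a (by simp)
        simp [lst, sc, List.getLastD]
        positivity
      | cons b u =>
        have hIH := ih (fun x hx => hnz x (by simp [hx])) (List.suffix_refl _) (by simp)
        rw [lst_cons_cons, sc_cons_cons]
        have ha : a ≠ 0 := hnz a (by simp)
        have hb : b ≠ 0 := hnz b (by simp)
        simp only [List.headI] at hIH ⊢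
        by_cases hab : a * b < 0
        · simp only [hab, if_true, pow_add, pow_one]
          nlinarith [sq_nonneg b, sq_pos_of_ne_zero hb]
        · have : 0 < a * b := lt_of_le_of_ne (not_lt.mp hab) (by positivity)
          simp only [hab, if_false, zero_add]
          nlinarith [sq_pos_of_ne_zero hb]
    · have hIH := ih (fun x hx => hnz x (by simp [hx])) h'
        (by rintro rfl; exact hne rfl)
      cases M with
      | nil => simp [List.suffix_nil.mp h'] at hne
      | cons b u => rw [lst_cons_cons]; exact hIH

/-- every value up to sc L is attained as sc of a nonempty suffix -/
lemma sc_coverage : ∀ (L : List ℝ), L ≠ [] → ∀ t, t ≤ sc L →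
    ∃ S, S <:+ L ∧ S ≠ [] ∧ sc S = t := by
  intro L
  induction L with
  | nil => simp
  | cons a M ih =>
    intro _ t ht
    rcases eq_or_lt_of_le ht with h | h
    · exact ⟨a :: M, List.suffix_refl _, by simp, h.symm⟩
    · cases M with
      | nil => simp [sc] at h
      | cons b u =>
        rw [sc_cons_cons] at h
        have ht' : t ≤ sc (b :: u) := by split at h <;> omega
        obtain ⟨S, hS, hne, hsc⟩ := ih (by simp) t ht'
        exact ⟨S, hS.trans (List.suffix_cons _ _), hne, hsc⟩

/-- transfer: a nonempty suffix of the filtered list is the filtered version of some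
  dropped original list, whose head is a nonzero original entry. -/
lemma sc_transfer : ∀ (l : List ℝ) (S : List ℝ),
    S <:+ l.filter (fun x => decide (x ≠ 0)) → S ≠ [] →
    ∃ j, j < l.length ∧ (l.drop j).filter (fun x => decide (x ≠ 0)) = S ∧
      l.getD j 0 = S.headI ∧ S.headI ≠ 0 := by
  intro l
  induction l with
  | nil => intro S hS hne; rw [List.filter_nil, List.suffix_nil] at hS; exact absurd hS hne
  | cons a M ih =>
    intro S hS hne
    by_cases ha : a = 0
    · rw [List.filter_cons_of_neg (by simp [ha])] at hS
      obtain ⟨j, hj, h1, h2, h3⟩ := ih S hS hne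
      exact ⟨j + 1, by simpa using hj, by simpa using h1, by simpa using h2, h3⟩
    · rw [List.filter_cons_of_pos (by simp [ha])] at hS
      rcases List.suffix_cons_iff.mp hS with h' | h'
      · refine ⟨0, by simp, ?_, ?_, ?_⟩
        · rw [List.drop_zero, List.filter_cons_of_pos (by simp [ha]), h']
        · simp [h']
        · simp [h', ha]
      · obtain ⟨j, hj, h1, h2, h3⟩ := ih S h' hne
        exact ⟨j + 1, by simpa using hj, by simpa using h1, by simpa using h2, h3⟩

lemma steps_strictMono {g : ℕ → ℕ} {K : ℕ} (h : ∀ i, i < K → g i < g (i+1)) :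
    ∀ i j, i < j → j ≤ K → g i < g j := by
  intro i j hij hjK
  induction j with
  | zero => omega
  | succ j ihj =>
    rcases Nat.lt_or_ge i j with h' | h'
    · exact (ihj h' (by omega)).trans (h j (by omega))
    · have : i = j := by omega
      subst this; exact h i (by omega)

/-- extraction of a strictly alternating chain from a nowhere-zero list -/
lemma sc_extract : ∀ (l : List ℝ), (∀ a ∈ l, a ≠ 0) → ∀ K : ℕ, K ≤ sc l → 1 ≤ l.length →
    ∃ g : ℕ → ℕ, g 0 = 0 ∧ (∀ i, i < K → g i < g (i+1)) ∧ (∀ i, i ≤ K → g i < l.length) ∧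
      ∀ i, i < K → l.getD (g i) 0 * l.getD (g (i+1)) 0 < 0 := by
  intro l
  induction l with
  | nil => intro _ K _ h; simp at h
  | cons a M ih =>
    intro hnz K hK hlen
    rcases Nat.eq_zero_or_pos K with rfl | hKpos
    · exact ⟨fun _ => 0, rfl, by omega, fun i _ => by simpa using hlen, by omega⟩
    · have hscl : 1 ≤ sc (a :: M) := le_trans hKpos hK
      cases M with
      | nil => simp [sc] at hscl
      | cons b u =>
        have hnzM : ∀ x ∈ b :: u, x ≠ 0 := fun x hx => hnz x (by simp [hx])
        have ha : a ≠ 0 := hnz a (by simp)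
        have hb : b ≠ 0 := hnz b (by simp)
        rw [sc_cons_cons] at hK
        by_cases hab : a * b < 0
        · -- use IH with K - 1
          obtain ⟨g', hg0, hstep, hbd, hpair⟩ := ih hnzM (K - 1)
            (by simp [hab] at hK; omega) (by simp)
          refine ⟨fun i => if i = 0 then 0 else g' (i-1) + 1, by simp, ?_, ?_, ?_⟩
          · intro i hi
            cases i with
            | zero => simp
            | succ j =>
              have := hstep j (by omega)
              simp only [if_neg (by omega : ¬ j + 1 = 0), if_neg (by omega : ¬ j + 1 + 1 = 0),
                Nat.add_sub_cancel]
              omega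
          · intro i hi
            cases i with
            | zero => simp
            | succ j =>
              have := hbd j (by omega)
              simp only [if_neg (by omega : ¬ j + 1 = 0), Nat.add_sub_cancel,
                List.length_cons] at this ⊢
              omega
          · intro i hi
            cases i with
            | zero => simpa [hg0] using hab
            | succ j =>
              have := hpair j (by omega)
              simp only [if_neg (by omega : ¬ j + 1 = 0), if_neg (by omega : ¬ j + 1 + 1 = 0),
                Nat.add_sub_cancel, List.getD_cons_succ]
              exact this
        · -- a*b > 0 : use IH with K
          have hab' : 0 < a * b := lt_of_le_of_ne (not_lt.mp hab) (by positivity)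
          obtain ⟨g', hg0, hstep, hbd, hpair⟩ := ih hnzM K
            (by simp [hab] at hK; omega) (by simp)
          refine ⟨fun i => if i = 0 then 0 else g' i + 1, by simp, ?_, ?_, ?_⟩
          · intro i hi
            cases i with
            | zero =>
              have := hstep 0 hi
              simp only [if_true, if_neg (by omega : ¬ (0:ℕ) + 1 = 0)]
              omega
            | succ j =>
              have := hstep (j+1) (by omega)
              simp only [if_neg (by omega : ¬ j + 1 = 0), if_neg (by omega : ¬ j + 1 + 1 = 0)]
              omega
          · intro i hi
            cases i with
            | zero => simp
            | succ j =>
              have := hbd (j+1) (by omega)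
              simp only [if_neg (by omega : ¬ j + 1 = 0), List.length_cons] at this ⊢
              omega
          · intro i hi
            cases i with
            | zero =>
              have h01 := hpair 0 hi
              rw [hg0] at h01
              simp only [List.getD_cons_zero] at h01
              simp only [if_true, if_neg (by omega : ¬ (0:ℕ) + 1 = 0),
                List.getD_cons_zero, List.getD_cons_succ]
              nlinarith [mul_pos hab' (neg_pos.mpr h01), sq_nonneg b, sq_pos_of_ne_zero hb]
            | succ j =>
              have := hpair (j+1) (by omega)
              simp only [if_neg (by omega : ¬ j + 1 = 0), if_neg (by omega : ¬ j + 1 + 1 = 0),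
                List.getD_cons_succ]
              exact this


lemma sc_le_length (l : List ℝ) : sc l ≤ l.length := by
  cases l with
  | nil => simp
  | cons a t => exact le_of_lt (sc_lt_length (by simp))

lemma Sp_le_card {m : ℕ} (v : Fin m → ℝ) : Sp v ≤ m := by
  rw [Sp]
  split
  · exact le_rfl
  · apply Finset.sup_le
    intro σ _
    rw [signChanges_eq_sc]
    calc sc _ ≤ (List.ofFn (fun i => if v i = 0 then (if σ i then (1:ℝ) else -1) else v i)).length :=
          sc_le_length _
      _ = m := List.length_ofFn

/-- The core positivity argument: if all maximal minors of an m×K matrix have the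
same strict sign, then `C *ᵥ 1` is nonzero and has at most K-1 sign changes. -/
lemma core {m K : ℕ} (hK : 0 < K) (hKm : K ≤ m) (C : Matrix (Fin m) (Fin K) ℝ) (s : ℝ)
    (hdet : ∀ f : Fin K → Fin m, StrictMono f → 0 < s * (C.submatrix f id).det) :
    C *ᵥ (fun _ => (1:ℝ)) ≠ 0 ∧ Sp (C *ᵥ (fun _ => (1:ℝ))) ≤ K - 1 := by
  set y : Fin m → ℝ := C *ᵥ (fun _ => (1:ℝ)) with hy_def
  -- nonsingular square submatrices kill "all ones is in kernel" claims
  have key : ∀ f : Fin K → Fin m, StrictMono f → (∀ p, y (f p) = 0) → False := by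
    intro f hf h0
    have hd := hdet f hf
    have hdne : (C.submatrix f id).det ≠ 0 := by
      intro h; rw [h, mul_zero] at hd; exact lt_irrefl 0 hd
    have hker : (C.submatrix f id) *ᵥ (fun _ => (1:ℝ)) = 0 := by
      funext p
      have : y (f p) = 0 := h0 p
      simpa [hy_def, Matrix.mulVec, Matrix.submatrix_apply, dotProduct] using this
    have := Matrix.eq_zero_of_mulVec_eq_zero hdne hker
    have h1 := congrFun this ⟨0, hK⟩
    norm_num at h1
  have hy : y ≠ 0 := by
    intro h0
    exact key (Fin.castLE hKm) (Fin.strictMono_castLE hKm) (fun p => by rw [h0]; rfl)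
  refine ⟨hy, ?_⟩
  rw [Sp, if_neg hy]
  apply Finset.sup_le
  intro σ _
  by_contra hcon
  push_neg at hcon
  set z : Fin m → ℝ := fun i => if y i = 0 then (if σ i then (1:ℝ) else -1) else y i with hz_def
  set l : List ℝ := List.ofFn z with hl_def
  have hlen : l.length = m := List.length_ofFn
  have hKsc : K ≤ sc l := by
    rw [← signChanges_eq_sc]
    omega
  have hnz : ∀ a ∈ l, a ≠ 0 := by
    intro a ha
    rw [hl_def, List.mem_ofFn] at ha
    obtain ⟨i, rfl⟩ := ha
    rw [hz_def]
    by_cases h : y i = 0 <;> by_cases h2 : σ i <;> simp [h, h2]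
  obtain ⟨g, hg0, hstep, hbd, hpair⟩ := sc_extract l hnz K hKsc (by omega)
  -- Fin-valued chain
  have hbd' : ∀ j, j ≤ K → g j < m := fun j hj => hlen ▸ hbd j hj
  set G : ℕ → Fin m := fun j => if h : g j < m then ⟨g j, h⟩ else ⟨0, by omega⟩ with hG_def
  have hGval : ∀ j, j ≤ K → (G j : ℕ) = g j := by
    intro j hj; rw [hG_def]; simp [hbd' j hj]
  have hGz : ∀ j, j ≤ K → l.getD (g j) 0 = z (G j) := by
    intro j hj
    have hlt : g j < l.length := by rw [hlen]; exact hbd' j hj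
    rw [List.getD_eq_getElem l 0 hlt]
    have he : l[g j]'hlt = z ⟨g j, hbd' j hj⟩ := by
      simp [hl_def]
    rw [he]
    congr 1
    exact Fin.ext (by rw [hGval j hj])
  have hzpair : ∀ j, j + 1 ≤ K → z (G j) * z (G (j+1)) < 0 := by
    intro j hj
    rw [← hGz j (by omega), ← hGz (j+1) hj]
    exact hpair j (by omega)
  have hzne : ∀ i, z i ≠ 0 := fun i => hnz (z i) (by rw [hl_def, List.mem_ofFn]; exact ⟨i, rfl⟩)
  set t0 : ℝ := z (G 0) with ht0
  have halt : ∀ j, j ≤ K → 0 < t0 * (-1:ℝ)^j * z (G j) := by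
    intro j
    induction j with
    | zero =>
      intro _
      have := hzne (G 0)
      simp only [pow_zero, mul_one, ← ht0]
      nlinarith [sq_pos_of_ne_zero this, sq_nonneg t0]
    | succ j ihj =>
      intro hj
      have h1 := ihj (by omega)
      have h2 := hzpair j hj
      have h3 := sq_pos_of_ne_zero (hzne (G j))
      rw [pow_succ]
      nlinarith
  have hyalt : ∀ j, j ≤ K → 0 ≤ t0 * (-1:ℝ)^j * y (G j) := by
    intro j hj
    by_cases h : y (G j) = 0
    · rw [h, mul_zero]
    · have : z (G j) = y (G j) := by rw [hz_def]; simp [h]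
      have := halt j hj
      rw [‹z (G j) = y (G j)›] at this
      exact le_of_lt this
  -- strictly monotone Fin-valued chain
  have hGmono : StrictMono (fun p : Fin (K+1) => G p.val) := by
    intro p q hpq
    have h1 := steps_strictMono hstep p.val q.val hpq (by omega)
    have : (G p.val : ℕ) < (G q.val : ℕ) := by
      rw [hGval p.val (by omega), hGval q.val (by omega)]; exact h1
    exact this
  set GF : Fin (K+1) → Fin m := fun p => G p.val with hGF
  -- the bordered matrix
  set D : Matrix (Fin (K+1)) (Fin (K+1)) ℝ :=
    Matrix.of (fun p q => Fin.cases (y (GF p)) (fun t => C (GF p) t) q) with hD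
  have hDdet : D.det = 0 := by
    rw [← Matrix.exists_mulVec_eq_zero_iff]
    refine ⟨Fin.cons 1 (fun _ => -1), ?_, ?_⟩
    · intro h
      have := congrFun h 0
      norm_num [Fin.cons_zero] at this
    · funext p
      rw [Matrix.mulVec, dotProduct, Fin.sum_univ_succ]
      simp only [hD, Matrix.of_apply, Fin.cons_zero, Fin.cons_succ, Fin.cases_zero,
        Fin.cases_succ, mul_one, mul_neg, Pi.zero_apply]
      have : y (GF p) = ∑ t : Fin K, C (GF p) t := by
        rw [hy_def]
        simp [Matrix.mulVec, dotProduct]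
      rw [this]
      simp [Finset.sum_neg_distrib]
  have hsub : ∀ p : Fin (K+1), D.submatrix p.succAbove Fin.succ
      = C.submatrix (GF ∘ p.succAbove) id := by
    intro p
    ext q t
    simp [hD, Matrix.submatrix_apply]
  have hexp : (0:ℝ) = ∑ p : Fin (K+1),
      (-1:ℝ)^(p:ℕ) * y (GF p) * (C.submatrix (GF ∘ p.succAbove) id).det := by
    rw [← hDdet, Matrix.det_succ_column_zero]
    apply Finset.sum_congr rfl
    intro p _
    rw [hsub p]
    simp [hD]
  have hterm : ∀ p : Fin (K+1),
      0 ≤ (t0 * (-1:ℝ)^(p:ℕ) * y (GF p)) * (s * (C.submatrix (GF ∘ p.succAbove) id).det) := by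
    intro p
    have h1 := hyalt p.val (by omega)
    have h2 := hdet (GF ∘ p.succAbove) (hGmono.comp (Fin.strictMono_succAbove p))
    exact mul_nonneg h1 (le_of_lt h2)
  have hsum0 : ∑ p : Fin (K+1),
      (t0 * (-1:ℝ)^(p:ℕ) * y (GF p)) * (s * (C.submatrix (GF ∘ p.succAbove) id).det) = 0 := by
    have : ∑ p : Fin (K+1),
        (t0 * (-1:ℝ)^(p:ℕ) * y (GF p)) * (s * (C.submatrix (GF ∘ p.succAbove) id).det)
        = (t0 * s) * ∑ p : Fin (K+1),
          (-1:ℝ)^(p:ℕ) * y (GF p) * (C.submatrix (GF ∘ p.succAbove) id).det := by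
      rw [Finset.mul_sum]
      apply Finset.sum_congr rfl
      intro p _
      ring
    rw [this, ← hexp, mul_zero]
  have hallzero : ∀ p : Fin (K+1), y (GF p) = 0 := by
    intro p
    have := (Finset.sum_eq_zero_iff_of_nonneg (fun p _ => hterm p)).mp hsum0 p (Finset.mem_univ p)
    have h2 := hdet (GF ∘ p.succAbove) (hGmono.comp (Fin.strictMono_succAbove p))
    have ht0ne : t0 ≠ 0 := hzne (G 0)
    have hpow : ((-1:ℝ)^(p:ℕ)) ≠ 0 := pow_ne_zero _ (by norm_num)
    rcases mul_eq_zero.mp this with h | h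
    · rcases mul_eq_zero.mp h with h' | h'
      · rcases mul_eq_zero.mp h' with h'' | h''
        · exact absurd h'' ht0ne
        · exact absurd h'' hpow
      · exact h'
    · rw [h] at h2; exact absurd h2 (lt_irrefl 0)
  exact key (GF ∘ Fin.castSucc) (hGmono.comp Fin.strictMono_castSucc)
    (fun p => hallzero p.castSucc)

lemma detC {m n k : ℕ} (A : Matrix (Fin m) (Fin n) ℝ) (x : Fin n → ℝ)
    (βF : Fin n → Fin (k+1)) (τ ε1 : ℝ)
    (hβmono : Monotone βF)
    (hsign : ∀ i, x i ≠ 0 → 0 < τ * x i * (-1:ℝ)^(k - (βF i : ℕ)))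
    (hcov : ∀ t : Fin (k+1), ∃ i, βF i = t ∧ x i ≠ 0)
    (hminor : ∀ (f : Fin (k+1) → Fin m) (r : Fin (k+1) → Fin n),
      StrictMono f → StrictMono r → 0 < ε1 * (A.submatrix f r).det) :
    ∀ f : Fin (k+1) → Fin m, StrictMono f →
      0 < (τ^(k+1) * (-1:ℝ)^(∑ t : Fin (k+1), (k - (t:ℕ))) * ε1) *
        ((Matrix.of (fun i t => ∑ j ∈ Finset.univ.filter (fun j => βF j = t), A i j * x j)
          : Matrix (Fin m) (Fin (k+1)) ℝ).submatrix f id).det := by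
  intro f hf
  set B : Fin (k+1) → Finset (Fin n) := fun t => Finset.univ.filter (fun j => βF j = t) with hB
  set C : Matrix (Fin m) (Fin (k+1)) ℝ :=
    Matrix.of (fun i t => ∑ j ∈ B t, A i j * x j) with hC
  set e : ℕ := ∑ t : Fin (k+1), (k - (t:ℕ)) with he
  set ρ : ℝ := τ^(k+1) * (-1:ℝ)^e with hρ
  set F := (Matrix.detRowAlternating :
    (Fin (k+1) → ℝ) [⋀^Fin (k+1)]→ₗ[ℝ] ℝ).toMultilinearMap with hF
  -- expansion of the determinant by multilinearity
  have hT : (C.submatrix f id).det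
      = ∑ r ∈ Fintype.piFinset B, (∏ t, x (r t)) * (A.submatrix f r).det := by
    have hrows : ((C.submatrix f id)ᵀ : Matrix (Fin (k+1)) (Fin (k+1)) ℝ)
        = fun t => ∑ j ∈ B t, x j • (fun p => A (f p) j) := by
      ext t p
      simp only [Matrix.transpose_apply, Matrix.submatrix_apply, id_eq, hC, Matrix.of_apply,
        Finset.sum_apply, Pi.smul_apply, smul_eq_mul]
      exact Finset.sum_congr rfl (fun j _ => mul_comm _ _)
    have hms := F.map_sum_finset
      (fun (t : Fin (k+1)) (j : Fin n) => x j • (fun p : Fin (k+1) => A (f p) j)) B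
    have hdet_eq : ∀ N : Matrix (Fin (k+1)) (Fin (k+1)) ℝ, N.det = F N := fun _ => rfl
    rw [← Matrix.det_transpose, hdet_eq, hrows, hms]
    apply Finset.sum_congr rfl
    intro r _
    have hsmul := F.map_smul_univ (fun t => x (r t)) (fun t p => A (f p) (r t))
    rw [hsmul, smul_eq_mul]
    congr 1
    have : F (fun t p => A (f p) (r t)) = ((A.submatrix f r)ᵀ).det := rfl
    rw [this, Matrix.det_transpose]
  -- strict monotonicity of selections
  have hrmono : ∀ r ∈ Fintype.piFinset B, StrictMono r := by
    intro r hr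
    have hβr : ∀ t, βF (r t) = t := by
      intro t
      have := (Fintype.mem_piFinset.mp hr) t
      rw [hB] at this
      simpa using this
    intro t t' htt'
    by_contra hcon
    push_neg at hcon
    have := hβmono hcon
    rw [hβr t, hβr t'] at this
    exact absurd htt' (not_lt.mpr this)
  -- positivity of full-support terms
  have hpos : ∀ r, (∀ t, βF (r t) = t) → (∀ t, x (r t) ≠ 0) → StrictMono r →
      0 < (ρ * ε1) * ((∏ t, x (r t)) * (A.submatrix f r).det) := by
    intro r hβr hz hrm
    have hp : 0 < ∏ t : Fin (k+1), (τ * x (r t) * (-1:ℝ)^(k - ((βF (r t)):ℕ))) :=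
      Finset.prod_pos (fun t _ => hsign (r t) (hz t))
    have hprod : ∏ t : Fin (k+1), (τ * x (r t) * (-1:ℝ)^(k - ((βF (r t)):ℕ)))
        = ρ * ∏ t, x (r t) := by
      simp_rw [hβr]
      rw [Finset.prod_mul_distrib, Finset.prod_mul_distrib, Finset.prod_const,
        Finset.prod_pow_eq_pow_sum, Finset.card_univ, Fintype.card_fin, hρ, ← he]
      ring
    rw [hprod] at hp
    have hd := hminor f r hf hrm
    calc (0:ℝ) < (ρ * ∏ t, x (r t)) * (ε1 * (A.submatrix f r).det) := mul_pos hp hd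
      _ = (ρ * ε1) * ((∏ t, x (r t)) * (A.submatrix f r).det) := by ring
  -- each term is nonnegative
  have hterm : ∀ r ∈ Fintype.piFinset B,
      0 ≤ (ρ * ε1) * ((∏ t, x (r t)) * (A.submatrix f r).det) := by
    intro r hr
    by_cases hz : ∀ t, x (r t) ≠ 0
    · have hβr : ∀ t, βF (r t) = t := by
        intro t
        have := (Fintype.mem_piFinset.mp hr) t
        rw [hB] at this; simpa using this
      exact le_of_lt (hpos r hβr hz (hrmono r hr))
    · push_neg at hz
      obtain ⟨t, ht⟩ := hz
      rw [Finset.prod_eq_zero (Finset.mem_univ t) ht]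
      simp
  -- strictly positive witness term
  have hwit : ∃ r ∈ Fintype.piFinset B,
      0 < (ρ * ε1) * ((∏ t, x (r t)) * (A.submatrix f r).det) := by
    choose w hw1 hw2 using hcov
    have hmem : (fun t => w t) ∈ Fintype.piFinset B := by
      rw [Fintype.mem_piFinset]
      intro t
      rw [hB]; simp [hw1 t]
    exact ⟨fun t => w t, hmem, hpos _ (fun t => hw1 t) (fun t => hw2 t) (hrmono _ hmem)⟩
  -- conclude
  have : 0 < ∑ r ∈ Fintype.piFinset B,
      (ρ * ε1) * ((∏ t, x (r t)) * (A.submatrix f r).det) :=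
    Finset.sum_pos' hterm hwit
  calc (0:ℝ) < ∑ r ∈ Fintype.piFinset B,
        (ρ * ε1) * ((∏ t, x (r t)) * (A.submatrix f r).det) := this
    _ = (ρ * ε1) * ∑ r ∈ Fintype.piFinset B, (∏ t, x (r t)) * (A.submatrix f r).det := by
        rw [Finset.mul_sum]
    _ = (τ^(k+1) * (-1:ℝ)^e * ε1) * (C.submatrix f id).det := by rw [hT, hρ]

theorem stmt3 {m n : ℕ} (A : Matrix (Fin m) (Fin n) ℝ) (ε : ℕ → ℝ)
    (hsv : ∀ r, ε r = 1 ∨ ε r = -1) (hA : ssrPattern A ε) :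
    ∀ x : Fin n → ℝ, x ≠ 0 → Sp (A *ᵥ x) ≤ Sm x := by
  intro x hx
  set P : ℝ → Bool := fun a => decide (a ≠ 0) with hP
  set l : List ℝ := List.ofFn x with hl
  set L : List ℝ := l.filter P with hLdef
  set k : ℕ := Sm x with hk
  have hlen : l.length = n := List.length_ofFn
  have hscL : sc L = k := by
    rw [hk, Sm, signChanges_eq_sc]
  have hnzL : ∀ a ∈ L, a ≠ 0 := by
    intro a ha
    rw [hLdef, List.mem_filter] at ha
    simpa [hP] using ha.2
  have hL : L ≠ [] := by
    intro h0
    apply hx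
    funext i
    show x i = 0
    by_contra hxi
    have hmem : x i ∈ L := by
      rw [hLdef, List.mem_filter]
      exact ⟨by rw [hl]; exact List.mem_ofFn.mpr ⟨i, rfl⟩, by simp [hP, hxi]⟩
    rw [h0] at hmem
    exact absurd hmem List.not_mem_nil
  have hkn : k + 1 ≤ n := by
    have h1 : sc L < L.length := sc_lt_length hL
    have h2 : L.length ≤ l.length := List.length_filter_le _ _
    omega
  by_cases hm : k + 1 ≤ m
  · -- main case
    set γ : Fin n → ℕ := fun i => sc ((l.drop i.val).filter P) with hγ
    set τ : ℝ := lst L with hτ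
    have hsufL : ∀ i : Fin n, (l.drop i.val).filter P <:+ L := by
      intro i
      rw [hLdef]
      exact (List.drop_suffix _ _).filter P
    have hγle : ∀ i, γ i ≤ k := by
      intro i
      rw [← hscL, hγ]
      exact sc_suffix_le (hsufL i)
    set βF : Fin n → Fin (k+1) := fun i => ⟨k - γ i, by omega⟩ with hβF
    have hβmono : Monotone βF := by
      intro i j hij
      have hsuf : (l.drop j.val).filter P <:+ (l.drop i.val).filter P := by
        apply List.IsSuffix.filter
        have : l.drop j.val = (l.drop i.val).drop (j.val - i.val) := by
          rw [List.drop_drop]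
          congr 1
          omega
        rw [this]
        exact List.drop_suffix _ _
      have h3 : γ j ≤ γ i := sc_suffix_le hsuf
      have h1 := hγle i
      have h2 := hγle j
      rw [hβF]
      simp only [Fin.mk_le_mk]
      omega
    have hsign : ∀ i, x i ≠ 0 → 0 < τ * x i * (-1:ℝ)^(k - ((βF i):ℕ)) := by
      intro i hxi
      have hklt : k - ((βF i):ℕ) = γ i := by
        have := hγle i
        rw [hβF]
        simp only []
        omega
      rw [hklt]
      have hilen : i.val < l.length := by rw [hlen]; exact i.isLt
      have hdropeq : l.drop i.val = x i :: l.drop (i.val + 1) := by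
        rw [List.drop_eq_getElem_cons hilen]
        congr 1
        simp [hl]
      have hSeq : (l.drop i.val).filter P = x i :: (l.drop (i.val + 1)).filter P := by
        rw [hdropeq, List.filter_cons_of_pos (by simp [hP, hxi])]
      have := sc_sign hnzL (hsufL i) (by rw [hSeq]; simp)
      rw [hSeq] at this
      simpa [hγ, hτ, hSeq] using this
    have hcov : ∀ t : Fin (k+1), ∃ i, βF i = t ∧ x i ≠ 0 := by
      intro t
      have htk : (t:ℕ) ≤ k := by omega
      obtain ⟨S, hS, hSne, hsc⟩ := sc_coverage L hL (k - (t:ℕ)) (by omega)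
      obtain ⟨j, hj, hfil, hget, hne0⟩ := sc_transfer l S (by rw [← hLdef]; exact hS) hSne
      refine ⟨⟨j, by rw [← hlen]; exact hj⟩, ?_, ?_⟩
      · rw [hβF]
        have hγval : γ ⟨j, by rw [← hlen]; exact hj⟩ = k - (t:ℕ) := by
          rw [hγ]
          simp only []
          rw [hfil, hsc]
        apply Fin.ext
        simp only [hγval]
        omega
      · have : x ⟨j, by rw [← hlen]; exact hj⟩ = l.getD j 0 := by
          rw [List.getD_eq_getElem l 0 hj]
          simp [hl]
        rw [this, hget]
        exact hne0
    have hminor : ∀ (f : Fin (k+1) → Fin m) (r : Fin (k+1) → Fin n),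
        StrictMono f → StrictMono r → 0 < ε (k+1) * (A.submatrix f r).det := by
      intro f r hf hr
      exact hA (k+1) (by omega) (by omega) f r hf hr
    have hdet := detC A x βF τ (ε (k+1)) hβmono hsign hcov hminor
    set C : Matrix (Fin m) (Fin (k+1)) ℝ :=
      Matrix.of (fun i t => ∑ j ∈ Finset.univ.filter (fun j => βF j = t), A i j * x j) with hC
    have hCy : C *ᵥ (fun _ => (1:ℝ)) = A *ᵥ x := by
      funext i
      rw [Matrix.mulVec, Matrix.mulVec, dotProduct, dotProduct]
      simp only [hC, Matrix.of_apply, mul_one]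
      rw [Finset.sum_fiberwise Finset.univ βF (fun j => A i j * x j)]
    obtain ⟨hyne, hSp⟩ := core (Nat.succ_pos k) hm C
      (τ^(k+1) * (-1:ℝ)^(∑ t : Fin (k+1), (k - (t:ℕ))) * ε (k+1)) hdet
    rw [hCy] at hSp
    simpa using hSp
  · -- trivial case : k ≥ m
    have := Sp_le_card (A *ᵥ x)
    omega
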